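/- For fractional Brownian motion B_H with Hurst parameter H ∈ (0,1), the covariance function R(t,s) = E[B_H(t)B_H(s)] = (1/2)(t^{2H} + s^{2H} - |t-s|^{2H}) is positive semidefinite on [0,∞), i.e., for any finite collection of times t_1,...,t_n ≥ 0 and reals c_1,...,c_n, the sum ∑_{j,k} c_j c_k R(t_j,t_k) is nonnegative. -/

import Mathlib

open Real MeasureTheory Set

/-- The auxiliary integral `J(x) = ∫_0^∞ (1 - cos(xu)) u^{-(1+a)} du`. -/
noncomputable def fbmJ (a x : ℝ) : ℝ :=
  ∫ u in Set.Ioi (0 : ℝ), (1 - Real.cos (x * u)) * u ^ (-(1 + a))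

lemma fbm_aux_integrable {a : ℝ} (ha : 0 < a) (ha2 : a < 2) (x : ℝ) :
    IntegrableOn (fun u : ℝ => (1 - Real.cos (x * u)) * u ^ (-(1 + a))) (Ioi 0) := by
  have hcont : ∀ s : Set ℝ, s ⊆ Ioi (0 : ℝ) →
      ContinuousOn (fun u : ℝ => (1 - Real.cos (x * u)) * u ^ (-(1 + a))) s := by
    intro s hs
    apply ContinuousOn.mul
    · exact (continuous_const.sub (Real.continuous_cos.comp (continuous_const.mul
        continuous_id))).continuousOn
    · exact fun u hu => (Real.continuousAt_rpow_const u _ (Or.inl (ne_of_gt (hs hu)))).continuousWithinAt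
  have habs : ∀ y : ℝ, |1 - Real.cos y| ≤ 2 := by
    intro y
    rw [abs_le]
    constructor
    · nlinarith [Real.cos_le_one y, Real.neg_one_le_cos y]
    · nlinarith [Real.cos_le_one y, Real.neg_one_le_cos y]
  have h1 : IntegrableOn (fun u : ℝ => (1 - Real.cos (x * u)) * u ^ (-(1 + a))) (Ioc 0 1) := by
    rw [integrableOn_Ioc_iff_integrableOn_Ioo]
    have hbound : IntegrableOn (fun u : ℝ => x ^ 2 / 2 * u ^ (1 - a)) (Ioo 0 1) := by
      exact ((intervalIntegral.integrableOn_Ioo_rpow_iff one_pos).2 (by linarith)).const_mul _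
    refine Integrable.mono' hbound ((hcont _ (Ioo_subset_Ioi_self)).aestronglyMeasurable
      measurableSet_Ioo) ?_
    filter_upwards [ae_restrict_mem measurableSet_Ioo] with u hu
    have hu0 : (0 : ℝ) < u := hu.1
    have hu1 : u ≤ 1 := hu.2.le
    have hc : 0 ≤ 1 - Real.cos (x * u) := by nlinarith [Real.cos_le_one (x * u)]
    have hc2 : 1 - Real.cos (x * u) ≤ (x * u) ^ 2 / 2 := by
      nlinarith [Real.one_sub_sq_div_two_le_cos (x := x * u)]
    have hrp : (0 : ℝ) ≤ u ^ (-(1 + a)) := Real.rpow_nonneg hu0.le _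
    rw [Real.norm_eq_abs, abs_of_nonneg (mul_nonneg hc hrp)]
    have : (x * u) ^ 2 / 2 * u ^ (-(1 + a)) = x ^ 2 / 2 * (u ^ 2 * u ^ (-(1 + a))) := by ring
    calc (1 - Real.cos (x * u)) * u ^ (-(1 + a)) ≤ (x * u) ^ 2 / 2 * u ^ (-(1 + a)) :=
          mul_le_mul_of_nonneg_right hc2 hrp
      _ = x ^ 2 / 2 * (u ^ 2 * u ^ (-(1 + a))) := by ring
      _ = x ^ 2 / 2 * u ^ (1 - a) := by
          have h2 : (u : ℝ) ^ 2 * u ^ (-(1 + a)) = u ^ (1 - a) := by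
            rw [show (u : ℝ) ^ 2 = u ^ ((2 : ℕ) : ℝ) from (Real.rpow_natCast u 2).symm,
              ← Real.rpow_add hu0]
            congr 1
            push_cast
            ring
          rw [h2]
  have h2 : IntegrableOn (fun u : ℝ => (1 - Real.cos (x * u)) * u ^ (-(1 + a))) (Ioi 1) := by
    have hbound : IntegrableOn (fun u : ℝ => 2 * u ^ (-(1 + a))) (Ioi 1) := by
      exact (integrableOn_Ioi_rpow_of_lt (by linarith) one_pos).const_mul _
    refine Integrable.mono' hbound ((hcont _ (Ioi_subset_Ioi zero_le_one)).aestronglyMeasurable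
      measurableSet_Ioi) ?_
    filter_upwards [ae_restrict_mem measurableSet_Ioi] with u hu
    have hu0 : (0 : ℝ) < u := lt_trans one_pos hu
    have hrp : (0 : ℝ) ≤ u ^ (-(1 + a)) := Real.rpow_nonneg hu0.le _
    rw [Real.norm_eq_abs, abs_mul, abs_of_nonneg hrp]
    exact mul_le_mul_of_nonneg_right (habs _) hrp
  have : Ioc (0 : ℝ) 1 ∪ Ioi 1 = Ioi 0 := Ioc_union_Ioi_eq_Ioi zero_le_one
  rw [← this]
  exact h1.union h2

lemma fbm_aux_scale {a : ℝ} (ha : 0 < a) (ha2 : a < 2) (x : ℝ) :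
    fbmJ a x = |x| ^ a * fbmJ a 1 := by
  -- reduce to |x|
  have habs : fbmJ a x = fbmJ a |x| := by
    unfold fbmJ
    rcases abs_choice x with h | h
    · rw [h]
    · rw [h]
      refine setIntegral_congr_fun measurableSet_Ioi (fun u _ => ?_)
      rw [show -x * u = -(x * u) by ring, Real.cos_neg]
  rw [habs]
  rcases eq_or_lt_of_le (abs_nonneg x) with h | h
  · rw [← h]
    simp [fbmJ, Real.zero_rpow (ne_of_gt ha)]
  · set y := |x| with hy
    have key := MeasureTheory.integral_comp_mul_left_Ioi
      (fun u : ℝ => (1 - Real.cos u) * u ^ (-(1 + a))) 0 h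
    rw [mul_zero] at key
    have h1 : fbmJ a 1 = ∫ u in Ioi (0 : ℝ), (1 - Real.cos u) * u ^ (-(1 + a)) := by
      unfold fbmJ
      exact setIntegral_congr_fun measurableSet_Ioi (fun u _ => by rw [one_mul])
    have step : fbmJ a y = y ^ (1 + a) *
        ∫ u in Ioi (0 : ℝ), (1 - Real.cos (y * u)) * (y * u) ^ (-(1 + a)) := by
      rw [← MeasureTheory.integral_const_mul]
      refine setIntegral_congr_fun measurableSet_Ioi (fun u hu => ?_)
      have hu0 : (0 : ℝ) < u := hu
      rw [Real.mul_rpow h.le hu0.le,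
        show y ^ (1 + a) * ((1 - Real.cos (y * u)) * (y ^ (-(1 + a)) * u ^ (-(1 + a)))) =
        (y ^ (1 + a) * y ^ (-(1 + a))) * ((1 - Real.cos (y * u)) * u ^ (-(1 + a))) by ring,
        ← Real.rpow_add h, show (1 : ℝ) + a + -(1 + a) = 0 by ring, Real.rpow_zero, one_mul]
    rw [step, key, smul_eq_mul, h1, ← mul_assoc]
    congr 1
    rw [← Real.rpow_neg_one y, ← Real.rpow_add h]
    congr 1
    ring

lemma fbm_aux_pos {a : ℝ} (ha : 0 < a) (ha2 : a < 2) : 0 < fbmJ a 1 := by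
  unfold fbmJ
  have hint := fbm_aux_integrable ha ha2 1
  have hnn : 0 ≤ᵐ[volume.restrict (Ioi (0:ℝ))]
      fun u : ℝ => (1 - Real.cos (1 * u)) * u ^ (-(1 + a)) := by
    filter_upwards [ae_restrict_mem measurableSet_Ioi] with u hu
    have := Real.cos_le_one (1 * u)
    exact mul_nonneg (by linarith) (Real.rpow_nonneg (le_of_lt hu) _)
  rw [setIntegral_pos_iff_support_of_nonneg_ae hnn hint]
  have hsub : Ioo (π / 2) π ⊆
      Function.support (fun u : ℝ => (1 - Real.cos (1 * u)) * u ^ (-(1 + a))) ∩ Ioi 0 := by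
    intro u hu
    have hu0 : (0 : ℝ) < u := lt_trans (by positivity) hu.1
    constructor
    · have hcos : Real.cos u ≤ 0 :=
        Real.cos_nonpos_of_pi_div_two_le_of_le hu.1.le (by linarith [hu.2.le, Real.pi_pos])
      have h1 : (0 : ℝ) < 1 - Real.cos (1 * u) := by rw [one_mul]; linarith
      have h2 : (0 : ℝ) < u ^ (-(1 + a)) := Real.rpow_pos_of_pos hu0 _
      exact ne_of_gt (mul_pos h1 h2)
    · exact hu0
  calc (0 : ENNReal) < volume (Ioo (π / 2) π) := by
        rw [Real.volume_Ioo]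
        rw [ENNReal.ofReal_pos]
        linarith [Real.pi_pos]
    _ ≤ _ := measure_mono hsub

/-- The fBm covariance kernel `R(t,s) = (t^{2H} + s^{2H} - |t-s|^{2H})/2`. -/
noncomputable def fbmCov (H t s : ℝ) : ℝ :=
  (t ^ (2 * H) + s ^ (2 * H) - |t - s| ^ (2 * H)) / 2

theorem fbm_cov_posSemidef (H : ℝ) (hH : H ∈ Set.Ioo (0 : ℝ) 1)
    (n : ℕ) (t : Fin n → ℝ) (ht : ∀ i, 0 ≤ t i) (c : Fin n → ℝ) :
    0 ≤ ∑ j : Fin n, ∑ k : Fin n, c j * c k * fbmCov H (t j) (t k) := by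
  obtain ⟨hH0, hH1⟩ := hH
  set a : ℝ := 2 * H with haa
  have ha : 0 < a := by positivity
  have ha2 : a < 2 := by simp only [haa]; linarith
  set J : ℝ → ℝ := fbmJ a with hJ
  have hJ1 : 0 < J 1 := fbm_aux_pos ha ha2
  -- per-pair integrand
  set g : Fin n → Fin n → ℝ → ℝ := fun j k u =>
    c j * c k * ((1 - Real.cos (t j * u)) * u ^ (-(1 + a))
      + (1 - Real.cos (t k * u)) * u ^ (-(1 + a))
      - (1 - Real.cos ((t j - t k) * u)) * u ^ (-(1 + a))) with hg
  have hgint : ∀ j k, IntegrableOn (g j k) (Ioi (0 : ℝ)) := by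
    intro j k
    exact (((fbm_aux_integrable ha ha2 (t j)).add
      (fbm_aux_integrable ha ha2 (t k))).sub (fbm_aux_integrable ha ha2 (t j - t k))).const_mul _
  have hgI : ∀ j k, ∫ u in Ioi (0 : ℝ), g j k u
      = c j * c k * (J (t j) + J (t k) - J (t j - t k)) := by
    intro j k
    rw [hg]
    simp only
    have h1 := fbm_aux_integrable ha ha2 (t j)
    have h2 := fbm_aux_integrable ha ha2 (t k)
    have h3 := fbm_aux_integrable ha ha2 (t j - t k)
    have h12 : IntegrableOn (fun u : ℝ => (1 - Real.cos (t j * u)) * u ^ (-(1 + a))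
        + (1 - Real.cos (t k * u)) * u ^ (-(1 + a))) (Ioi 0) := h1.add h2
    rw [MeasureTheory.integral_const_mul, MeasureTheory.integral_sub h12 h3,
      MeasureTheory.integral_add h1 h2]
    rfl
  -- Key identity
  have key : (2 * J 1) * ∑ j : Fin n, ∑ k : Fin n, c j * c k * fbmCov H (t j) (t k)
      = ∫ u in Ioi (0 : ℝ),
          ((∑ j : Fin n, c j * (1 - Real.cos (t j * u))) ^ 2
            + (∑ j : Fin n, c j * Real.sin (t j * u)) ^ 2) * u ^ (-(1 + a)) := by
    have hLHS : (2 * J 1) * ∑ j : Fin n, ∑ k : Fin n, c j * c k * fbmCov H (t j) (t k)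
        = ∑ j : Fin n, ∑ k : Fin n, c j * c k * (J (t j) + J (t k) - J (t j - t k)) := by
      rw [Finset.mul_sum]
      refine Finset.sum_congr rfl (fun j _ => ?_)
      rw [Finset.mul_sum]
      refine Finset.sum_congr rfl (fun k _ => ?_)
      have hjr : J (t j) = t j ^ a * J 1 := by
        rw [hJ, fbm_aux_scale ha ha2, abs_of_nonneg (ht j)]
      have hkr : J (t k) = t k ^ a * J 1 := by
        rw [hJ, fbm_aux_scale ha ha2, abs_of_nonneg (ht k)]
      have hdr : J (t j - t k) = |t j - t k| ^ a * J 1 := by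
        rw [hJ, fbm_aux_scale ha ha2]
      rw [hjr, hkr, hdr, fbmCov]
      ring
    rw [hLHS]
    -- rewrite the RHS integrand as a double sum and exchange with the integral
    have hptwise : ∀ u : ℝ,
        ((∑ j : Fin n, c j * (1 - Real.cos (t j * u))) ^ 2
          + (∑ j : Fin n, c j * Real.sin (t j * u)) ^ 2) * u ^ (-(1 + a))
        = ∑ j : Fin n, ∑ k : Fin n, g j k u := by
      intro u
      rw [sq, sq, Finset.sum_mul_sum, Finset.sum_mul_sum, ← Finset.sum_add_distrib]
      rw [Finset.sum_mul]
      refine Finset.sum_congr rfl (fun j _ => ?_)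
      rw [← Finset.sum_add_distrib, Finset.sum_mul]
      refine Finset.sum_congr rfl (fun k _ => ?_)
      rw [hg]
      simp only
      have hcos : Real.cos ((t j - t k) * u) = Real.cos (t j * u) * Real.cos (t k * u)
          + Real.sin (t j * u) * Real.sin (t k * u) := by
        rw [show (t j - t k) * u = t j * u - t k * u by ring, Real.cos_sub]
      rw [hcos]
      ring
    rw [show (∫ u in Ioi (0 : ℝ),
          ((∑ j : Fin n, c j * (1 - Real.cos (t j * u))) ^ 2
            + (∑ j : Fin n, c j * Real.sin (t j * u)) ^ 2) * u ^ (-(1 + a)))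
        = ∫ u in Ioi (0 : ℝ), ∑ j : Fin n, ∑ k : Fin n, g j k u from by
      exact setIntegral_congr_fun measurableSet_Ioi (fun u _ => hptwise u)]
    rw [MeasureTheory.integral_finset_sum _ (fun j _ =>
      MeasureTheory.integrable_finset_sum _ (fun k _ => hgint j k))]
    refine Finset.sum_congr rfl (fun j _ => ?_)
    rw [MeasureTheory.integral_finset_sum _ (fun k _ => hgint j k)]
    exact Finset.sum_congr rfl (fun k _ => (hgI j k).symm)
  -- nonnegativity of the integral
  have hnn : 0 ≤ ∫ u in Ioi (0 : ℝ),
      ((∑ j : Fin n, c j * (1 - Real.cos (t j * u))) ^ 2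
        + (∑ j : Fin n, c j * Real.sin (t j * u)) ^ 2) * u ^ (-(1 + a)) := by
    refine setIntegral_nonneg measurableSet_Ioi (fun u hu => ?_)
    have h1 : (0 : ℝ) ≤ (∑ j : Fin n, c j * (1 - Real.cos (t j * u))) ^ 2
        + (∑ j : Fin n, c j * Real.sin (t j * u)) ^ 2 := by positivity
    exact mul_nonneg h1 (Real.rpow_nonneg (le_of_lt hu) _)
  have h2J : (0 : ℝ) < 2 * J 1 := by linarith
  rw [← key] at hnn
  exact nonneg_of_mul_nonneg_right hnn h2J
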